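/- With n_1 < ⋯ < n_g positive integers and v ∈ (ℂ*)^g, define τ_N(n,v,u) = (-1)^{⌊g/2⌋} det(T(n,v,u))/θ(n_1,…,n_g) = Σ_{k=0}^N r_k(v) u^k where N = Σ_p n_p. Then r_0(v) = 1, r_N(v) = (-1)^{⌊g/2⌋} v_1⋯v_g, each r_k(v) is a polynomial of degree at most 1 in each individual variable v_p, and assigning weight n_p to v_p, r_k is isobaric of weight k. Moreover, for any σ ∈ {0,1}^g with n·σ = k, the coefficient of v_1^{σ_1}⋯v_g^{σ_g} in r_k is nonzero. -/

import Mathlib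

open Finset Matrix

/-- The Vandermonde determinant `θ(a₁,…,a_g) = ∏_{p<p'} (a_{p'} - a_p)`. -/
noncomputable def vdm {g : ℕ} (a : Fin g → ℂ) : ℂ :=
  ∏ p : Fin g, ∏ p' ∈ Finset.Ioi p, (a p' - a p)

/-- The `g×g` matrix `T(n,v,u)` with entries
`T_{p,p'} = n_{p'}^{p-1} (v_{p'} u^{n_{p'}} - (-1)^p)`. -/
noncomputable def matT {g : ℕ} (n : Fin g → ℕ) (v : Fin g → ℂ) (u : ℂ) :
    Matrix (Fin g) (Fin g) ℂ :=
  fun p p' => (n p' : ℂ) ^ (p : ℕ) * (v p' * u ^ (n p') - (-1 : ℂ) ^ ((p : ℕ) + 1))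

noncomputable def xsig {g : ℕ} (n : Fin g → ℕ) (σ : Fin g → Bool) : Fin g → ℂ :=
  fun p => if σ p then (n p : ℂ) else -(n p : ℂ)

def wt {g : ℕ} (n : Fin g → ℕ) (σ : Fin g → Bool) : ℕ := ∑ p, if σ p then n p else 0

noncomputable def ccoef {g : ℕ} (n : Fin g → ℕ) (σ : Fin g → Bool) : ℂ :=
  (-1 : ℂ) ^ (g / 2) * vdm (xsig n σ) / vdm (fun p => (n p : ℂ))

def boolEquiv (g : ℕ) : (Fin g → Bool) ≃ Finset (Fin g) where
  toFun σ := univ.filter fun p => σ p = true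
  invFun s := fun p => decide (p ∈ s)
  left_inv σ := by ext p; simp
  right_inv s := by ext p; simp

lemma det_expand {g : ℕ} (n : Fin g → ℕ) (v : Fin g → ℂ) (u : ℂ) :
    Matrix.det (matT n v u) =
      ∑ σ : Fin g → Bool,
        vdm (xsig n σ) * (∏ p, if σ p then v p else 1) * u ^ (wt n σ) := by
  classical
  set A : Matrix (Fin g) (Fin g) ℂ :=
    Matrix.of fun p' p => (v p' * u ^ n p') * (n p' : ℂ) ^ (p : ℕ) with hA
  set B : Matrix (Fin g) (Fin g) ℂ :=
    Matrix.of fun p' p => (-(n p' : ℂ)) ^ (p : ℕ) with hB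
  have hT : (matT n v u)ᵀ = A + B := by
    ext p' p
    show (n p' : ℂ) ^ (p : ℕ) * (v p' * u ^ (n p') - (-1 : ℂ) ^ ((p : ℕ) + 1)) =
      (v p' * u ^ n p') * (n p' : ℂ) ^ (p : ℕ) + (-(n p' : ℂ)) ^ (p : ℕ)
    rw [neg_pow, pow_succ]
    ring
  rw [← Matrix.det_transpose, hT]
  have hadd : Matrix.det (A + B) =
      ∑ s : Finset (Fin g), Matrix.det (s.piecewise A B) :=
    (Matrix.detRowAlternating (R := ℂ) (n := Fin g)).toMultilinearMap.map_add_univ A B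
  rw [hadd]
  rw [← Equiv.sum_comp (boolEquiv g) (fun s => Matrix.det (s.piecewise A B))]
  refine Finset.sum_congr rfl fun σ _ => ?_
  have hpiece : (boolEquiv g σ).piecewise A B =
      Matrix.of fun (p' p : Fin g) => (if σ p' then v p' * u ^ n p' else 1) * (xsig n σ p') ^ (p : ℕ) := by
    ext p' p
    by_cases h : σ p' = true
    · rw [show (boolEquiv g σ).piecewise A B p' = A p' from
        Finset.piecewise_eq_of_mem _ _ _ (by simp [boolEquiv, h])]
      simp [hA, xsig, h]
    · rw [show (boolEquiv g σ).piecewise A B p' = B p' from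
        Finset.piecewise_eq_of_notMem _ _ _ (by simp [boolEquiv, h])]
      simp [hB, xsig, h]
  rw [hpiece]
  have hvd : (Matrix.of fun (p' p : Fin g) => (if σ p' then v p' * u ^ n p' else 1) * (xsig n σ p') ^ (p : ℕ))
      = Matrix.of fun (p' p : Fin g) => (if σ p' then v p' * u ^ n p' else 1) *
          (Matrix.vandermonde (xsig n σ)) p' p := rfl
  rw [hvd, Matrix.det_mul_column, Matrix.det_vandermonde]
  have hprod : (∏ p', if σ p' then v p' * u ^ n p' else 1)
      = (∏ p, if σ p then v p else 1) * u ^ (wt n σ) := by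
    rw [wt, ← Finset.prod_pow_eq_pow_sum, ← Finset.prod_mul_distrib]
    refine Finset.prod_congr rfl fun p _ => ?_
    by_cases h : σ p = true <;> simp [h]
  rw [hprod, vdm]
  ring

lemma vdm_ne_zero {g : ℕ} {a : Fin g → ℂ} (h : ∀ i j : Fin g, i < j → a j ≠ a i) :
    vdm a ≠ 0 := by
  refine Finset.prod_ne_zero_iff.2 fun i _ => Finset.prod_ne_zero_iff.2 fun j hj => ?_
  exact sub_ne_zero_of_ne (h i j (Finset.mem_Ioi.1 hj))

lemma xsig_ne {g : ℕ} {n : Fin g → ℕ} (hmono : StrictMono n) (hpos : ∀ p, 0 < n p)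
    (σ : Fin g → Bool) : ∀ i j : Fin g, i < j → xsig n σ j ≠ xsig n σ i := by
  intro i j hij
  have hne : (n j : ℂ) ≠ (n i : ℂ) := by
    simp only [ne_eq, Nat.cast_inj]; exact (hmono hij).ne'
  have hsum : (n j : ℂ) + (n i : ℂ) ≠ 0 := by
    have h0 : ((n j + n i : ℕ) : ℂ) ≠ 0 :=
      Nat.cast_ne_zero.2 (by have := hpos j; omega)
    push_cast at h0; exact h0
  cases hσj : σ j <;> cases hσi : σ i <;>
    simp only [xsig, hσj, hσi, Bool.false_eq_true, if_true, if_false] <;> intro hEq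
  · exact hne (neg_injective hEq)
  · exact hsum (by linear_combination -hEq)
  · exact hsum (by linear_combination hEq)
  · exact hne hEq

lemma even_aux (g : ℕ) (E : ℕ) (hE : E * 2 = g * (g - 1)) : Even (g / 2 + E) := by
  rcases Nat.even_or_odd g with ⟨m, hm⟩ | ⟨m, hm⟩
  · subst hm
    rcases Nat.eq_zero_or_pos m with rfl | hm0
    · have hE0 : E = 0 := by omega
      simp [hE0]
    · set t := m + m - 1 with ht
      have h1 : (m + m) * (m + m - 1) = (m * t) * 2 := by rw [← ht]; ring
      have hEe : E = m * t := by have := hE.trans h1; omega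
      have h2 : (m + m) / 2 = m := by omega
      rw [h2, hEe]
      have h3 : m + m * t = m * (t + 1) := by ring
      have h4 : t + 1 = m + m := by omega
      exact ⟨m * m, by rw [h3, h4]; ring⟩
  · subst hm
    have h0 : 2 * m + 1 - 1 = 2 * m := by omega
    have h1 : (2 * m + 1) * (2 * m + 1 - 1) = ((2 * m + 1) * m) * 2 := by rw [h0]; ring
    have hEe : E = (2 * m + 1) * m := by have := hE.trans h1; omega
    have h2 : (2 * m + 1) / 2 = m := by omega
    rw [h2, hEe]
    exact ⟨m * (m + 1), by ring⟩

lemma E_val (g : ℕ) : (∑ i : Fin g, (Finset.Ioi i).card) * 2 = g * (g - 1) := by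
  have h1 : (∑ i : Fin g, (Finset.Ioi i).card) = ∑ i : Fin g, (g - 1 - (i : ℕ)) :=
    Finset.sum_congr rfl fun i _ => Fin.card_Ioi i
  rw [h1, Fin.sum_univ_eq_sum_range (fun i => g - 1 - i),
    Finset.sum_range_reflect (fun j => j) g]
  exact Finset.sum_range_id_mul_two g

lemma vdm_neg {g : ℕ} (n : Fin g → ℕ) :
    vdm (xsig n (fun _ => false)) =
      (-1 : ℂ) ^ (∑ i : Fin g, (Finset.Ioi i).card) * vdm (fun p => (n p : ℂ)) := by
  unfold vdm xsig
  calc (∏ i : Fin g, ∏ j ∈ Finset.Ioi i,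
        ((if (false : Bool) then (n j : ℂ) else -(n j : ℂ)) -
          (if (false : Bool) then (n i : ℂ) else -(n i : ℂ))))
      = ∏ i : Fin g, ∏ j ∈ Finset.Ioi i, (-1 : ℂ) * ((n j : ℂ) - (n i : ℂ)) := by
        refine Finset.prod_congr rfl fun i _ => Finset.prod_congr rfl fun j _ => ?_
        simp only [Bool.false_eq_true, if_false]; ring
    _ = ∏ i : Fin g, ((-1 : ℂ) ^ (Finset.Ioi i).card * ∏ j ∈ Finset.Ioi i, ((n j : ℂ) - (n i : ℂ))) := by
        refine Finset.prod_congr rfl fun i _ => ?_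
        rw [Finset.prod_mul_distrib, Finset.prod_const]
    _ = (∏ i : Fin g, (-1 : ℂ) ^ (Finset.Ioi i).card) *
          ∏ i : Fin g, ∏ j ∈ Finset.Ioi i, ((n j : ℂ) - (n i : ℂ)) := Finset.prod_mul_distrib
    _ = (-1 : ℂ) ^ (∑ i : Fin g, (Finset.Ioi i).card) *
          ∏ i : Fin g, ∏ j ∈ Finset.Ioi i, ((n j : ℂ) - (n i : ℂ)) := by
        rw [Finset.prod_pow_eq_pow_sum]

/-- Properties of the coefficients `r_k` of
`τ_N(n,v,u) = (-1)^{⌊g/2⌋} det T(n,v,u) / θ(n) = Σ_{k=0}^N r_k(v) u^k`: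
`r_0 = 1`, `r_N = (-1)^{⌊g/2⌋} v₁⋯v_g`, each `r_k` is of degree at most one in
each variable `v_p` and isobaric of weight `k` (weight `n_p` assigned to `v_p`),
and every monomial `v^σ` with `n·σ = k` occurs in `r_k` with nonzero
coefficient. -/
theorem tau_coefficients_properties (g : ℕ) (hg : 0 < g) (n : Fin g → ℕ)
    (hmono : StrictMono n) (hpos : ∀ p, 0 < n p)
    (N : ℕ) (hN : N = ∑ p, n p)
    (r : ℕ → (Fin g → ℂ) → ℂ)
    (hr : ∀ (v : Fin g → ℂ) (u : ℂ),
      (-1 : ℂ) ^ (g / 2) * Matrix.det (matT n v u) =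
        vdm (fun p => (n p : ℂ)) * ∑ k ∈ Finset.range (N + 1), r k v * u ^ k) :
    (∀ v : Fin g → ℂ, r 0 v = 1) ∧
    (∀ v : Fin g → ℂ, r N v = (-1 : ℂ) ^ (g / 2) * ∏ p, v p) ∧
    (∀ k : ℕ, k ≤ N → ∃ c : (Fin g → Bool) → ℂ,
      (∀ σ : Fin g → Bool, (∑ p, if σ p then n p else 0) = k → c σ ≠ 0) ∧
      (∀ v : Fin g → ℂ,
        r k v = ∑ σ : Fin g → Bool,
          (if (∑ p, if σ p then n p else 0) = k then c σ else 0) *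
            ∏ p, (if σ p then v p else 1))) := by
  classical
  have hvdm : vdm (fun p => (n p : ℂ)) ≠ 0 := by
    refine vdm_ne_zero fun i j hij => ?_
    simp only [ne_eq, Nat.cast_inj]; exact (hmono hij).ne'
  have hccne : ∀ σ : Fin g → Bool, ccoef n σ ≠ 0 := fun σ =>
    div_ne_zero (mul_ne_zero (pow_ne_zero _ (by norm_num))
      (vdm_ne_zero (xsig_ne hmono hpos σ))) hvdm
  -- key formula
  have key : ∀ k, k ≤ N → ∀ v : Fin g → ℂ,
      r k v = ∑ σ : Fin g → Bool,
        (if wt n σ = k then ccoef n σ else 0) * ∏ p, (if σ p then v p else 1) := by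
    intro k hk v
    set P1 : Polynomial ℂ :=
      ∑ j ∈ Finset.range (N + 1), Polynomial.C (r j v) * Polynomial.X ^ j with hP1
    set P2 : Polynomial ℂ :=
      ∑ σ : Fin g → Bool,
        Polynomial.C (ccoef n σ * ∏ p, (if σ p then v p else 1)) * Polynomial.X ^ (wt n σ)
      with hP2
    have hEval : ∀ u : ℂ, P1.eval u = P2.eval u := by
      intro u
      have h1 : P1.eval u = ∑ j ∈ Finset.range (N + 1), r j v * u ^ j := by
        rw [hP1, Polynomial.eval_finset_sum]
        simp
      have h2 : P2.eval u =
          ∑ σ : Fin g → Bool,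
            ccoef n σ * (∏ p, (if σ p then v p else 1)) * u ^ (wt n σ) := by
        rw [hP2, Polynomial.eval_finset_sum]
        simp only [Polynomial.eval_mul, Polynomial.eval_C, Polynomial.eval_pow,
          Polynomial.eval_X, mul_assoc]
      rw [h1, h2]
      apply mul_left_cancel₀ hvdm
      rw [← hr v u, det_expand, Finset.mul_sum, Finset.mul_sum]
      refine Finset.sum_congr rfl fun σ _ => ?_
      rw [ccoef]
      field_simp
    have hPeq : P1 = P2 := Polynomial.funext hEval
    have c1 : P1.coeff k = r k v := by
      rw [hP1, Polynomial.finset_sum_coeff]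
      simp only [Polynomial.coeff_C_mul, Polynomial.coeff_X_pow, mul_ite, mul_one, mul_zero]
      rw [Finset.sum_ite_eq (Finset.range (N + 1)) k (fun j => r j v)]
      simp [Nat.lt_succ_of_le hk]
    have c2 : P2.coeff k =
        ∑ σ : Fin g → Bool,
          (if wt n σ = k then ccoef n σ else 0) * ∏ p, (if σ p then v p else 1) := by
      rw [hP2, Polynomial.finset_sum_coeff]
      refine Finset.sum_congr rfl fun σ _ => ?_
      simp only [Polynomial.coeff_C_mul, Polynomial.coeff_X_pow]
      by_cases h : wt n σ = k
      · simp [h]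
      · simp [h, Ne.symm h]
    rw [← c1, hPeq, c2]
  refine ⟨?_, ?_, ?_⟩
  · -- r 0 = 1
    intro v
    rw [key 0 (Nat.zero_le N) v]
    rw [Fintype.sum_eq_single (fun _ => false)]
    · have hw : wt n (fun _ => false) = 0 := by simp [wt]
      rw [if_pos hw]
      have hcc : ccoef n (fun _ => false) = 1 := by
        rw [ccoef, vdm_neg, ← mul_assoc, ← pow_add, mul_div_assoc, div_self hvdm, mul_one]
        exact Even.neg_one_pow (even_aux g _ (E_val g))
      simp [hcc]
    · intro σ hσ
      have hw : wt n σ ≠ 0 := by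
        intro h0
        apply hσ
        funext p
        by_contra hp
        have hpt : σ p = true := by
          cases hσp : σ p
          · exact absurd (by simp [hσp]) hp
          · rfl
        have h1 := Finset.single_le_sum (f := fun q => if σ q then n q else 0)
          (fun q _ => Nat.zero_le _) (Finset.mem_univ p)
        simp only [hpt, if_true] at h1
        rw [wt] at h0
        have h2 := hpos p
        omega
      rw [if_neg hw, zero_mul]
  · -- r N
    intro v
    rw [key N le_rfl v]
    rw [Fintype.sum_eq_single (fun _ => true)]
    · have hw : wt n (fun _ => true) = N := by simp [wt, hN]
      rw [if_pos hw]
      have hx : xsig n (fun _ => true) = fun p => (n p : ℂ) := by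
        funext p; simp [xsig]
      have hcc : ccoef n (fun _ => true) = (-1 : ℂ) ^ (g / 2) := by
        rw [ccoef, hx, mul_div_assoc, div_self hvdm, mul_one]
      simp [hcc]
    · intro σ hσ
      have hw : wt n σ ≠ N := by
        intro h0
        have hex : ∃ p, σ p = false := by
          by_contra hall
          push_neg at hall
          apply hσ
          funext p
          cases hσp : σ p
          · exact absurd hσp (hall p)
          · rfl
        obtain ⟨p, hp⟩ := hex
        have hlt : wt n σ < N := by
          rw [hN, wt]
          refine Finset.sum_lt_sum (fun i _ => by split <;> simp [Nat.zero_le]) ?_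
          exact ⟨p, Finset.mem_univ p, by simp [hp, hpos p]⟩
        omega
      rw [if_neg hw, zero_mul]
  · -- general k
    intro k hk
    exact ⟨ccoef n, fun σ _ => hccne σ, fun v => key k hk v⟩
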